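/- Let u, ψ be entire with ψ(z) = az + b, |a| = 1, n ∈ ℕ, and suppose sup_z |u(z)||ψ(z)|^n e^{(|ψ(z)|² − |z|²)/2} < ∞. Then L_{(u,ψ,n)}(z) := |u(z)||ψ(z)|^n e^{(|ψ(z)|² − |z|²)/2} is constant, equal to |b^n u(0)| e^{|b|²/2}, for all z ∈ ℂ. -/

import Mathlib

open Complex Real

/-- For `ψ(z) = az + b` with `|a| = 1`, if `L_{(u,ψ,n)}` is bounded, then it is
constant, equal to `|b^n u(0)| e^{|b|²/2}`. -/
theorem stmt_16 (u : ℂ → ℂ) (a b : ℂ) (n : ℕ)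
    (hu : Differentiable ℂ u) (ha : ‖a‖ = 1)
    (hbdd : BddAbove (Set.range fun z : ℂ =>
      ‖u z‖ * (‖a * z + b‖) ^ n *
        Real.exp (((‖a * z + b‖) ^ 2 - (‖z‖) ^ 2) / 2))) :
    ∀ z : ℂ,
      ‖u z‖ * (‖a * z + b‖) ^ n *
          Real.exp (((‖a * z + b‖) ^ 2 - (‖z‖) ^ 2) / 2)
        = ‖b ^ n * u 0‖ * Real.exp ((‖b‖) ^ 2 / 2) := by
  set c : ℂ := a * (starRingEnd ℂ) b with hc
  set F : ℂ → ℂ := fun z => u z * (a * z + b) ^ n * Complex.exp (c * z) with hFdef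
  have hF : Differentiable ℂ F := by
    apply Differentiable.mul
    · exact hu.mul ((((differentiable_const a).mul differentiable_id).add
        (differentiable_const b)).pow n)
    · exact ((differentiable_const c).mul differentiable_id).cexp
  have hre : ∀ z : ℂ, (c * z).re + (‖b‖) ^ 2 / 2
      = ((‖a * z + b‖) ^ 2 - (‖z‖) ^ 2) / 2 := by
    intro z
    have hna : Complex.normSq a = 1 := by
      rw [Complex.normSq_eq_norm_sq, ha]; norm_num
    have h1 : (‖a * z + b‖) ^ 2
        = Complex.normSq z + 2 * (a * z * (starRingEnd ℂ) b).re + Complex.normSq b := by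
      rw [Complex.sq_norm, Complex.normSq_add, Complex.normSq_mul, hna]; ring
    have h2 : (c * z).re = (a * z * (starRingEnd ℂ) b).re := by
      rw [hc]; ring_nf
    rw [h1, h2, Complex.sq_norm z, Complex.sq_norm b]
    ring
  have habs : ∀ z : ℂ, ‖F z‖ * Real.exp ((‖b‖) ^ 2 / 2)
      = ‖u z‖ * (‖a * z + b‖) ^ n *
        Real.exp (((‖a * z + b‖) ^ 2 - (‖z‖) ^ 2) / 2) := by
    intro z
    simp only [hFdef, norm_mul, norm_pow, Complex.norm_exp]
    rw [mul_assoc, ← Real.exp_add, hre z]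
  obtain ⟨C, hC⟩ := hbdd
  have hCb : ∀ z : ℂ, ‖F z‖ ≤ C * Real.exp (-((‖b‖) ^ 2 / 2)) := by
    intro z
    have h := hC (Set.mem_range_self z)
    rw [← habs z] at h
    have hepos : (0:ℝ) < Real.exp ((‖b‖) ^ 2 / 2) := Real.exp_pos _
    rw [Real.exp_neg, mul_comm C, ← div_eq_inv_mul]
    exact (le_div_iff₀ hepos).mpr h
  have hbF : Bornology.IsBounded (Set.range F) := by
    rw [Metric.isBounded_iff_subset_closedBall 0]
    refine ⟨C * Real.exp (-((‖b‖) ^ 2 / 2)), ?_⟩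
    intro x hx
    obtain ⟨z, rfl⟩ := hx
    simpa [Complex.dist_eq] using hCb z
  intro z
  have hz := hF.apply_eq_apply_of_bounded hbF z 0
  rw [← habs z, hz]
  have : F 0 = b ^ n * u 0 := by simp [hFdef]; ring
  rw [this]
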